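/- Let L > 0 and let q₀ = q₁⁰ + i q₂⁰ and q̃₀ = q̃₁⁰ + i q̃₂⁰ be C² complex-valued functions on [0, L]. Let (v₀, e⁰, w⁰) and (ṽ₀, ẽ⁰, w̃⁰) be the solutions on [0, L] of the systems v₀ₛ = q₁⁰ e⁰ + q₂⁰ w⁰, e⁰ₛ = −q₁⁰ v₀, w⁰ₛ = −q₂⁰ v₀ and ṽ₀ₛ = q̃₁⁰ ẽ⁰ + q̃₂⁰ w̃⁰, ẽ⁰ₛ = −q̃₁⁰ ṽ₀, w̃⁰ₛ = −q̃₂⁰ ṽ₀, respectively, both with initial value (e₁, −e₂, e₃) at s = 0. Then there exists a constant C > 0, depending only on L, ‖q₀‖₂, and ‖q̃₀‖₂, and non-decreasing in ‖q₀‖₂ and ‖q̃₀‖₂, such that ‖ṽ₀ − v₀‖₃ ≤ C ( ‖q̃₀ − q₀‖₂ + ‖q̃₀ − q₀‖₂³ ). -/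

import Mathlib

open Real MeasureTheory Set

noncomputable section

/-- Euclidean dot product on ℝ³ (vectors as `Fin 3 → ℝ`). -/
def dot3 (a b : Fin 3 → ℝ) : ℝ := a 0 * b 0 + a 1 * b 1 + a 2 * b 2

/-- Euclidean norm on ℝ³. -/
def norm3 (a : Fin 3 → ℝ) : ℝ := Real.sqrt (dot3 a a)

/-- Cross product on ℝ³. -/
def cross3 (a b : Fin 3 → ℝ) : Fin 3 → ℝ :=
  ![a 1 * b 2 - a 2 * b 1, a 2 * b 0 - a 0 * b 2, a 0 * b 1 - a 1 * b 0]

/-- Partial derivative in the first (space) variable. -/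
def pS {E : Type*} [NormedAddCommGroup E] [NormedSpace ℝ E]
    (f : ℝ → ℝ → E) (s t : ℝ) : E := deriv (fun s' => f s' t) s

/-- Partial derivative in the second (time) variable. -/
def pT {E : Type*} [NormedAddCommGroup E] [NormedSpace ℝ E]
    (f : ℝ → ℝ → E) (s t : ℝ) : E := deriv (fun t' => f s t') t

/-- The Sobolev `H^m` norm on `(0, L)` of an ℝ³-valued function. -/
def sobNorm3 (m : ℕ) (L : ℝ) (f : ℝ → Fin 3 → ℝ) : ℝ :=
  Real.sqrt (∑ k ∈ Finset.range (m + 1), ∫ s in (0:ℝ)..L, norm3 (iteratedDeriv k f s) ^ 2)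

/-- The Sobolev `H^m` norm on `(0, L)` of a ℂ-valued function. -/
def sobNormC (m : ℕ) (L : ℝ) (f : ℝ → ℂ) : ℝ :=
  Real.sqrt (∑ k ∈ Finset.range (m + 1), ∫ s in (0:ℝ)..L, ‖iteratedDeriv k f s‖ ^ 2)

/-- Sup (`L^∞`) norm on `[0, L]`. -/
def supIcc (f : ℝ → ℝ) (L : ℝ) : ℝ := ⨆ s : Set.Icc (0:ℝ) L, |f (s : ℝ)|

/-! ### Auxiliary lemmas -/

lemma dot3_self_nonneg (a : Fin 3 → ℝ) : 0 ≤ dot3 a a := by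
  unfold dot3; nlinarith [sq_nonneg (a 0), sq_nonneg (a 1), sq_nonneg (a 2)]

lemma norm_le_norm3 (a : Fin 3 → ℝ) : ‖a‖ ≤ norm3 a := by
  unfold norm3; rw [pi_norm_le_iff_of_nonneg (Real.sqrt_nonneg _)]
  intro i
  rw [Real.norm_eq_abs, ← Real.sqrt_sq_eq_abs]
  apply Real.sqrt_le_sqrt
  have e2 : a ⟨2, by norm_num⟩ = a 2 := rfl
  fin_cases i <;> · unfold dot3; simp only [Fin.isValue]; norm_num [e2]; nlinarith [sq_nonneg (a 0), sq_nonneg (a 1), sq_nonneg (a 2)]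

lemma norm3_le (a : Fin 3 → ℝ) : norm3 a ≤ Real.sqrt 3 * ‖a‖ := by
  rw [← Real.sqrt_sq (norm_nonneg a), ← Real.sqrt_mul (by norm_num)]
  apply Real.sqrt_le_sqrt
  have h0 : |a 0| ≤ ‖a‖ := by rw [← Real.norm_eq_abs]; exact norm_le_pi_norm a 0
  have h1 : |a 1| ≤ ‖a‖ := by rw [← Real.norm_eq_abs]; exact norm_le_pi_norm a 1
  have h2 : |a 2| ≤ ‖a‖ := by rw [← Real.norm_eq_abs]; exact norm_le_pi_norm a 2
  have n0 : (0:ℝ) ≤ ‖a‖ := norm_nonneg a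
  unfold dot3
  nlinarith [abs_nonneg (a 0), abs_nonneg (a 1), abs_nonneg (a 2), sq_abs (a 0), sq_abs (a 1), sq_abs (a 2)]

/-- Agmon-type inequality: sup on [0,L] bounded via L² norms of f and f'. -/
lemma sup_le_of_L2 {L : ℝ} (hL : 0 < L) {f : ℝ → ℂ} (hf : ContDiff ℝ 1 f) {t : ℝ}
    (ht : t ∈ Icc (0:ℝ) L) :
    ‖f t‖ ≤ Real.sqrt (1/L + 2) *
      Real.sqrt ((∫ s in (0:ℝ)..L, ‖f s‖^2) + ∫ s in (0:ℝ)..L, ‖deriv f s‖^2) := by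
  have hfd : Differentiable ℝ f := hf.differentiable one_ne_zero
  have hfc : Continuous f := hfd.continuous
  have hf'c : Continuous (deriv f) := hf.continuous_deriv le_rfl
  set u : ℝ → ℝ := fun s => ‖f s‖ ^ 2 with hu_def
  have hu_eq : ∀ s, u s = (f s).re^2 + (f s).im^2 := by
    intro s
    simp [hu_def, Complex.sq_norm, Complex.normSq_apply]
    ring
  set u' : ℝ → ℝ := fun s => 2 * ((f s).re * (deriv f s).re + (f s).im * (deriv f s).im) with hu'_def
  have hud : ∀ s, HasDerivAt u (u' s) s := by
    intro s
    have h1 : HasDerivAt f (deriv f s) s := (hfd s).hasDerivAt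
    have hre : HasDerivAt (fun s => (f s).re) ((deriv f s).re) s :=
      (Complex.reCLM.hasFDerivAt.comp_hasDerivAt s h1)
    have him : HasDerivAt (fun s => (f s).im) ((deriv f s).im) s :=
      (Complex.imCLM.hasFDerivAt.comp_hasDerivAt s h1)
    have := ((hre.mul hre).add (him.mul him))
    have h2 : HasDerivAt (fun s => (f s).re * (f s).re + (f s).im * (f s).im)
        ((deriv f s).re * (f s).re + (f s).re * (deriv f s).re +
         ((deriv f s).im * (f s).im + (f s).im * (deriv f s).im)) s := this
    have h3 : (fun s => (f s).re * (f s).re + (f s).im * (f s).im) = u := by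
      funext s; rw [hu_eq s]; ring
    rw [h3] at h2
    convert h2 using 1
    simp [hu'_def]; ring
  have huc : Continuous u := by
    continuity
  have hu'c : Continuous u' := by
    apply Continuous.mul continuous_const
    exact ((Complex.continuous_re.comp hfc).mul (Complex.continuous_re.comp hf'c)).add
      ((Complex.continuous_im.comp hfc).mul (Complex.continuous_im.comp hf'c))
  -- pointwise bound |u'| ≤ 2u + 2|f'|^2
  have habs : ∀ s, |u' s| ≤ 2 * u s + 2 * ‖deriv f s‖^2 := by
    intro s
    have h1 : |(f s).re| ≤ ‖f s‖ := Complex.abs_re_le_norm _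
    have h2 : |(f s).im| ≤ ‖f s‖ := Complex.abs_im_le_norm _
    have h3 : |(deriv f s).re| ≤ ‖deriv f s‖ := Complex.abs_re_le_norm _
    have h4 : |(deriv f s).im| ≤ ‖deriv f s‖ := Complex.abs_im_le_norm _
    have h5 : (0:ℝ) ≤ ‖f s‖ := norm_nonneg _
    have h6 : (0:ℝ) ≤ ‖deriv f s‖ := norm_nonneg _
    have hb : |u' s| ≤ 2 * (‖f s‖ * ‖deriv f s‖)
        + 2 * (‖f s‖ * ‖deriv f s‖) := by
      simp only [hu'_def]
      calc |2 * ((f s).re * (deriv f s).re + (f s).im * (deriv f s).im)|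
          ≤ 2 * (|(f s).re * (deriv f s).re| + |(f s).im * (deriv f s).im|) := by
            rw [abs_mul]; simp only [abs_two]
            gcongr
            exact abs_add_le _ _
        _ ≤ 2 * (‖f s‖ * ‖deriv f s‖)
            + 2 * (‖f s‖ * ‖deriv f s‖) := by
            rw [abs_mul, abs_mul]
            nlinarith [mul_le_mul h1 h3 (abs_nonneg _) h5, mul_le_mul h2 h4 (abs_nonneg _) h5]
    have : 2 * (‖f s‖ * ‖deriv f s‖) ≤ u s + ‖deriv f s‖^2 := by
      simp only [hu_def]; nlinarith [sq_nonneg (‖f s‖ - ‖deriv f s‖)]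
    linarith
  -- minimum point
  obtain ⟨s₀, hs₀, hmin⟩ := isCompact_Icc.exists_isMinOn (nonempty_Icc.mpr hL.le) huc.continuousOn
  set I0 : ℝ := ∫ s in (0:ℝ)..L, ‖f s‖^2 with hI0_def
  set I1 : ℝ := ∫ s in (0:ℝ)..L, ‖deriv f s‖^2 with hI1_def
  have hI0u : I0 = ∫ s in (0:ℝ)..L, u s := rfl
  have hI0nn : 0 ≤ I0 := intervalIntegral.integral_nonneg hL.le (fun s _ => by positivity)
  have hI1nn : 0 ≤ I1 := intervalIntegral.integral_nonneg hL.le (fun s _ => by positivity)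
  have hg2c : Continuous (fun s => ‖deriv f s‖^2) := by continuity
  have hmean : L * u s₀ ≤ I0 := by
    have h1 : ∫ s in (0:ℝ)..L, u s₀ ≤ ∫ s in (0:ℝ)..L, u s :=
      intervalIntegral.integral_mono_on hL.le intervalIntegrable_const
        (huc.intervalIntegrable 0 L) (fun s hs => isMinOn_iff.mp hmin s hs)
    rw [hI0u]
    calc L * u s₀ = ∫ s in (0:ℝ)..L, u s₀ := by
          rw [intervalIntegral.integral_const]; simp [smul_eq_mul]
      _ ≤ _ := h1
  set J : ℝ := ∫ s in (0:ℝ)..L, |u' s| with hJ_def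
  have hJle : J ≤ 2*I0 + 2*I1 := by
    have h2 : ∫ s in (0:ℝ)..L, |u' s| ≤ ∫ s in (0:ℝ)..L, (2 * u s + 2 * ‖deriv f s‖^2) :=
      intervalIntegral.integral_mono_on hL.le (hu'c.abs.intervalIntegrable 0 L)
        (((continuous_const.mul huc).add (continuous_const.mul hg2c)).intervalIntegrable 0 L)
        (fun s _ => habs s)
    calc J ≤ ∫ s in (0:ℝ)..L, (2 * u s + 2 * ‖deriv f s‖^2) := h2
      _ = 2*I0 + 2*I1 := by
          rw [intervalIntegral.integral_add (f := fun s => 2 * u s) (g := fun s => 2 * ‖deriv f s‖^2)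
            ((continuous_const.mul huc).intervalIntegrable 0 L)
            ((continuous_const.mul hg2c).intervalIntegrable 0 L),
            intervalIntegral.integral_const_mul, intervalIntegral.integral_const_mul]
  have hfa : |∫ s in s₀..t, u' s| ≤ J := by
    rcases le_total s₀ t with h | h
    · calc |∫ s in s₀..t, u' s| ≤ ∫ s in s₀..t, |u' s| :=
            intervalIntegral.abs_integral_le_integral_abs h
        _ ≤ J := intervalIntegral.integral_mono_interval hs₀.1 h ht.2
            (Filter.Eventually.of_forall (fun s => abs_nonneg _)) (hu'c.abs.intervalIntegrable 0 L)
    · rw [intervalIntegral.integral_symm, abs_neg]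
      calc |∫ s in t..s₀, u' s| ≤ ∫ s in t..s₀, |u' s| :=
            intervalIntegral.abs_integral_le_integral_abs h
        _ ≤ J := intervalIntegral.integral_mono_interval ht.1 h hs₀.2
            (Filter.Eventually.of_forall (fun s => abs_nonneg _)) (hu'c.abs.intervalIntegrable 0 L)
  have hftc : u t - u s₀ = ∫ s in s₀..t, u' s :=
    (intervalIntegral.integral_eq_sub_of_hasDerivAt (fun x _ => hud x)
      (hu'c.intervalIntegrable s₀ t)).symm
  have hut : u t ≤ (1/L + 2) * (I0 + I1) := by
    have h5 : u t ≤ u s₀ + J := by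
      have := le_abs_self (∫ s in s₀..t, u' s)
      linarith [hftc, hfa]
    have h6 : u s₀ ≤ I0 / L := by
      rw [le_div_iff₀ hL]; linarith [hmean]
    have h7 : I0 / L = (1/L) * I0 := by ring
    have h8 : (0:ℝ) < 1/L := by positivity
    calc u t ≤ I0/L + (2*I0 + 2*I1) := by linarith [hJle]
      _ ≤ (1/L + 2) * (I0 + I1) := by rw [h7]; nlinarith [hI0nn, hI1nn]
  have h9 : ‖f t‖ = Real.sqrt (u t) := by
    rw [hu_def]; simp [Real.sqrt_sq (norm_nonneg _)]
  rw [h9, ← Real.sqrt_mul (by positivity : (0:ℝ) ≤ 1/L + 2)]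
  exact Real.sqrt_le_sqrt hut

lemma sobNormC_sq (m : ℕ) {L : ℝ} (hL : 0 ≤ L) (f : ℝ → ℂ) :
    sobNormC m L f ^ 2 = ∑ k ∈ Finset.range (m + 1), ∫ s in (0:ℝ)..L, ‖iteratedDeriv k f s‖ ^ 2 := by
  apply Real.sq_sqrt
  apply Finset.sum_nonneg
  intro k _
  exact intervalIntegral.integral_nonneg hL (fun s _ => by positivity)

lemma integral_sq_le_sobNormC {m k : ℕ} (hk : k ≤ m) {L : ℝ} (hL : 0 ≤ L) (f : ℝ → ℂ) :
    ∫ s in (0:ℝ)..L, ‖iteratedDeriv k f s‖^2 ≤ sobNormC m L f ^ 2 := by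
  rw [sobNormC_sq m hL f]
  apply Finset.single_le_sum (f := fun k => ∫ s in (0:ℝ)..L, ‖iteratedDeriv k f s‖ ^ 2)
    (fun j _ => intervalIntegral.integral_nonneg hL (fun s _ => by positivity))
  exact Finset.mem_range.mpr (Nat.lt_succ_of_le hk)

lemma contDiff_one_deriv {f : ℝ → ℂ} (hf : ContDiff ℝ 2 f) : ContDiff ℝ 1 (deriv f) := by
  have h2 : ContDiff ℝ (1+1) f := by exact_mod_cast hf
  exact (contDiff_succ_iff_deriv.mp h2).2.2

lemma sup_le_sobNormC {L : ℝ} (hL : 0 < L) {f : ℝ → ℂ} (hf : ContDiff ℝ 2 f) {t : ℝ}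
    (ht : t ∈ Icc (0:ℝ) L) :
    ‖f t‖ ≤ Real.sqrt (1/L + 2) * sobNormC 2 L f ∧
    ‖deriv f t‖ ≤ Real.sqrt (1/L + 2) * sobNormC 2 L f := by
  have h2 : (0:ℝ) ≤ ∫ s in (0:ℝ)..L, ‖iteratedDeriv 2 f s‖ ^ 2 :=
    intervalIntegral.integral_nonneg hL.le (fun s _ => by positivity)
  have h0 : (0:ℝ) ≤ ∫ s in (0:ℝ)..L, ‖iteratedDeriv 0 f s‖ ^ 2 :=
    intervalIntegral.integral_nonneg hL.le (fun s _ => by positivity)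
  have hsum : sobNormC 2 L f ^2 = (∫ s in (0:ℝ)..L, ‖f s‖ ^ 2)
      + (∫ s in (0:ℝ)..L, ‖deriv f s‖ ^ 2)
      + (∫ s in (0:ℝ)..L, ‖deriv (deriv f) s‖ ^ 2) := by
    rw [sobNormC_sq 2 hL.le f]
    rw [Finset.sum_range_succ, Finset.sum_range_succ, Finset.sum_range_one]
    rw [iteratedDeriv_zero, iteratedDeriv_one, iteratedDeriv_succ, iteratedDeriv_one]
  have hd2 : (0:ℝ) ≤ ∫ s in (0:ℝ)..L, ‖deriv (deriv f) s‖ ^ 2 :=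
    intervalIntegral.integral_nonneg hL.le (fun s _ => by positivity)
  have hnn : (0:ℝ) ≤ sobNormC 2 L f := Real.sqrt_nonneg _
  rw [iteratedDeriv_zero] at h0
  constructor
  · refine le_trans (sup_le_of_L2 hL (hf.of_le (by norm_num)) ht) ?_
    gcongr
    rw [← Real.sqrt_sq hnn]
    apply Real.sqrt_le_sqrt
    rw [hsum]; linarith
  · refine le_trans (sup_le_of_L2 hL (contDiff_one_deriv hf) ht) ?_
    gcongr
    rw [← Real.sqrt_sq hnn]
    apply Real.sqrt_le_sqrt
    rw [hsum]; linarith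

lemma frame_bound {L : ℝ} (hL : 0 < L) {q : ℝ → ℂ} {v e w : ℝ → Fin 3 → ℝ}
    (hv : ∀ s ∈ Icc (0:ℝ) L, HasDerivWithinAt v ((q s).re • e s + (q s).im • w s) (Icc 0 L) s)
    (he : ∀ s ∈ Icc (0:ℝ) L, HasDerivWithinAt e (-(q s).re • v s) (Icc 0 L) s)
    (hw : ∀ s ∈ Icc (0:ℝ) L, HasDerivWithinAt w (-(q s).im • v s) (Icc 0 L) s)
    (hv0 : v 0 = ![1,0,0]) (he0 : e 0 = ![0,-1,0]) (hw0 : w 0 = ![0,0,1]) :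
    ∀ s ∈ Icc (0:ℝ) L, ‖v s‖ ≤ Real.sqrt 3 ∧ ‖e s‖ ≤ Real.sqrt 3 ∧ ‖w s‖ ≤ Real.sqrt 3 := by
  set S : ℝ → ℝ := fun s => dot3 (v s) (v s) + dot3 (e s) (e s) + dot3 (w s) (w s) with hS_def
  have hS : ∀ s ∈ Icc (0:ℝ) L, HasDerivWithinAt S 0 (Icc 0 L) s := by
    intro s hs
    have hvi := hasDerivWithinAt_pi.mp (hv s hs)
    have hei := hasDerivWithinAt_pi.mp (he s hs)
    have hwi := hasDerivWithinAt_pi.mp (hw s hs)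
    have H := ((((hvi 0).mul (hvi 0)).add ((hvi 1).mul (hvi 1))).add ((hvi 2).mul (hvi 2))).add
      (((((hei 0).mul (hei 0)).add ((hei 1).mul (hei 1))).add ((hei 2).mul (hei 2))).add
       ((((hwi 0).mul (hwi 0)).add ((hwi 1).mul (hwi 1))).add ((hwi 2).mul (hwi 2))))
    have hSeq : S = fun s => ((v s 0 * v s 0 + v s 1 * v s 1) + v s 2 * v s 2) +
        (((e s 0 * e s 0 + e s 1 * e s 1) + e s 2 * e s 2) +
         ((w s 0 * w s 0 + w s 1 * w s 1) + w s 2 * w s 2)) := by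
      funext x; simp only [hS_def]; unfold dot3; ring
    rw [hSeq]
    refine H.congr_deriv ?_
    simp only [Pi.add_apply, Pi.smul_apply, Pi.neg_apply, smul_eq_mul, neg_mul]
    ring
  have hconst : ∀ s ∈ Icc (0:ℝ) L, S s = 3 := by
    intro s hs
    have := norm_image_sub_le_of_norm_deriv_le_segment' (C := 0) (f' := fun _ => (0:ℝ)) hS
      (fun x _ => by simp) s hs
    have h0 : S 0 = 3 := by
      simp only [hS_def]; unfold dot3
      rw [hv0, he0, hw0]
      simp
      norm_num
    have : |S s - S 0| ≤ 0 := by simpa using this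
    have := abs_nonpos_iff.mp this
    linarith [h0, sub_eq_zero.mp this]
  intro s hs
  have h3 := hconst s hs
  have hvv : 0 ≤ dot3 (v s) (v s) := by unfold dot3; nlinarith [mul_self_nonneg (v s 0), mul_self_nonneg (v s 1), mul_self_nonneg (v s 2)]
  have hee : 0 ≤ dot3 (e s) (e s) := by unfold dot3; nlinarith [mul_self_nonneg (e s 0), mul_self_nonneg (e s 1), mul_self_nonneg (e s 2)]
  have hww : 0 ≤ dot3 (w s) (w s) := by unfold dot3; nlinarith [mul_self_nonneg (w s 0), mul_self_nonneg (w s 1), mul_self_nonneg (w s 2)]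
  have hSs : dot3 (v s) (v s) ≤ 3 ∧ dot3 (e s) (e s) ≤ 3 ∧ dot3 (w s) (w s) ≤ 3 := by
    simp only [hS_def] at h3; refine ⟨by linarith, by linarith, by linarith⟩
  refine ⟨?_, ?_, ?_⟩
  · exact le_trans (norm_le_norm3 _) (Real.sqrt_le_sqrt hSs.1)
  · exact le_trans (norm_le_norm3 _) (Real.sqrt_le_sqrt hSs.2.1)
  · exact le_trans (norm_le_norm3 _) (Real.sqrt_le_sqrt hSs.2.2)

lemma smul_norm_le {x : ℝ} {u : Fin 3 → ℝ} {bx bu : ℝ} (hx : |x| ≤ bx) (hu : ‖u‖ ≤ bu) :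
    ‖x • u‖ ≤ bx * bu := by
  rw [norm_smul, Real.norm_eq_abs]
  exact mul_le_mul hx hu (norm_nonneg u) (le_trans (abs_nonneg x) hx)

set_option maxHeartbeats 1000000 in
lemma gronwall_frames {L : ℝ} (hL : 0 < L) (q qt : ℝ → ℂ)
    (v e w vt et wt : ℝ → Fin 3 → ℝ)
    (hv : ∀ s ∈ Icc (0:ℝ) L, HasDerivWithinAt v ((q s).re • e s + (q s).im • w s) (Icc 0 L) s)
    (he : ∀ s ∈ Icc (0:ℝ) L, HasDerivWithinAt e (-(q s).re • v s) (Icc 0 L) s)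
    (hw : ∀ s ∈ Icc (0:ℝ) L, HasDerivWithinAt w (-(q s).im • v s) (Icc 0 L) s)
    (hvt : ∀ s ∈ Icc (0:ℝ) L, HasDerivWithinAt vt ((qt s).re • et s + (qt s).im • wt s) (Icc 0 L) s)
    (het : ∀ s ∈ Icc (0:ℝ) L, HasDerivWithinAt et (-(qt s).re • vt s) (Icc 0 L) s)
    (hwt : ∀ s ∈ Icc (0:ℝ) L, HasDerivWithinAt wt (-(qt s).im • vt s) (Icc 0 L) s)
    (hv0 : v 0 = ![1,0,0]) (he0 : e 0 = ![0,-1,0]) (hw0 : w 0 = ![0,0,1])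
    (hvt0 : vt 0 = ![1,0,0]) (het0 : et 0 = ![0,-1,0]) (hwt0 : wt 0 = ![0,0,1])
    -- abstract sup bounds
    (Mq Mδ r : ℝ) (hMqnn : 0 ≤ Mq) (hMδnn : 0 ≤ Mδ) (hrnn : 0 ≤ r)
    (hbq : ∀ s ∈ Icc (0:ℝ) L, |(q s).re| ≤ Mq ∧ |(q s).im| ≤ Mq)
    (hbδre : ∀ s ∈ Icc (0:ℝ) L, |(qt s).re - (q s).re| ≤ Mδ ∧ |(qt s).im - (q s).im| ≤ Mδ)
    (hfr : ∀ s ∈ Icc (0:ℝ) L, ‖vt s‖ ≤ r ∧ ‖et s‖ ≤ r ∧ ‖wt s‖ ≤ r) :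
    ∀ s ∈ Icc (0:ℝ) L, ‖vt s - v s‖ ≤ 2*r*Mδ*Real.exp ((2*Mq+1)*L)
      ∧ ‖et s - e s‖ ≤ 2*r*Mδ*Real.exp ((2*Mq+1)*L)
      ∧ ‖wt s - w s‖ ≤ 2*r*Mδ*Real.exp ((2*Mq+1)*L) := by
  set D : ℝ → (Fin 3 → ℝ) × (Fin 3 → ℝ) × (Fin 3 → ℝ) :=
    fun s => (vt s - v s, (et s - e s, wt s - w s)) with hD_def
  set D' : ℝ → (Fin 3 → ℝ) × (Fin 3 → ℝ) × (Fin 3 → ℝ) := fun s =>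
    (((qt s).re • et s + (qt s).im • wt s) - ((q s).re • e s + (q s).im • w s),
     ((-(qt s).re • vt s) - (-(q s).re • v s), (-(qt s).im • vt s) - (-(q s).im • v s))) with hD'_def
  have hD : ∀ s ∈ Icc (0:ℝ) L, HasDerivWithinAt D (D' s) (Icc 0 L) s :=
    fun s hs => ((hvt s hs).sub (hv s hs)).prodMk (((het s hs).sub (he s hs)).prodMk
      ((hwt s hs).sub (hw s hs)))
  set K : ℝ := 2*Mq + 1 with hK_def
  set ε : ℝ := 2*r*Mδ with hε_def
  have hKpos : 0 < K := by simp only [hK_def]; linarith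
  have hεnn : 0 ≤ ε := by simp only [hε_def]; positivity
  have hDsub : ∀ s, ‖vt s - v s‖ ≤ ‖D s‖ ∧ ‖et s - e s‖ ≤ ‖D s‖ ∧ ‖wt s - w s‖ ≤ ‖D s‖ := by
    intro s
    refine ⟨norm_fst_le (D s), ?_, ?_⟩
    · exact le_trans (norm_fst_le ((D s).2)) (norm_snd_le (D s))
    · exact le_trans (norm_snd_le ((D s).2)) (norm_snd_le (D s))
  have bound : ∀ s ∈ Ico (0:ℝ) L, ‖D' s‖ ≤ K * ‖D s‖ + ε := by
    intro s hs
    have hs' : s ∈ Icc (0:ℝ) L := Ico_subset_Icc_self hs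
    obtain ⟨hq1, hq2⟩ := hbq s hs'
    obtain ⟨hδ1, hδ2⟩ := hbδre s hs'
    obtain ⟨hf1, hf2, hf3⟩ := hfr s hs'
    obtain ⟨hd1, hd2, hd3⟩ := hDsub s
    have hDnn : (0:ℝ) ≤ ‖D s‖ := norm_nonneg _
    have hc1 : ((qt s).re • et s + (qt s).im • wt s) - ((q s).re • e s + (q s).im • w s)
        = ((qt s).re - (q s).re) • et s + ((qt s).im - (q s).im) • wt s
          + (q s).re • (et s - e s) + (q s).im • (wt s - w s) := by module
    have hb1 : ‖((qt s).re • et s + (qt s).im • wt s) - ((q s).re • e s + (q s).im • w s)‖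
        ≤ K * ‖D s‖ + ε := by
      rw [hc1]
      have := norm_add_le (((qt s).re - (q s).re) • et s + ((qt s).im - (q s).im) • wt s
        + (q s).re • (et s - e s)) ((q s).im • (wt s - w s))
      have h2 := norm_add_le (((qt s).re - (q s).re) • et s + ((qt s).im - (q s).im) • wt s)
        ((q s).re • (et s - e s))
      have h3 := norm_add_le (((qt s).re - (q s).re) • et s) (((qt s).im - (q s).im) • wt s)
      have t1 := smul_norm_le hδ1 hf2
      have t2 := smul_norm_le hδ2 hf3
      have t3 := smul_norm_le hq1 hd2
      have t4 := smul_norm_le hq2 hd3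
      simp only [hK_def, hε_def]
      nlinarith [mul_le_mul_of_nonneg_left hd2 hMqnn]
    have hc2 : (-(qt s).re • vt s) - (-(q s).re • v s)
        = (-((qt s).re - (q s).re)) • vt s + (-(q s).re) • (vt s - v s) := by module
    have hb2 : ‖(-(qt s).re • vt s) - (-(q s).re • v s)‖ ≤ K * ‖D s‖ + ε := by
      rw [hc2]
      have h3 := norm_add_le ((-((qt s).re - (q s).re)) • vt s) ((-(q s).re) • (vt s - v s))
      have t1 : ‖(-((qt s).re - (q s).re)) • vt s‖ ≤ Mδ * r :=
        smul_norm_le (by rw [abs_neg]; exact hδ1) hf1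
      have t2 : ‖(-(q s).re) • (vt s - v s)‖ ≤ Mq * ‖D s‖ :=
        smul_norm_le (by rw [abs_neg]; exact hq1) hd1
      simp only [hK_def, hε_def]
      nlinarith [mul_nonneg hrnn hMδnn]
    have hc3 : (-(qt s).im • vt s) - (-(q s).im • v s)
        = (-((qt s).im - (q s).im)) • vt s + (-(q s).im) • (vt s - v s) := by module
    have hb3 : ‖(-(qt s).im • vt s) - (-(q s).im • v s)‖ ≤ K * ‖D s‖ + ε := by
      rw [hc3]
      have h3 := norm_add_le ((-((qt s).im - (q s).im)) • vt s) ((-(q s).im) • (vt s - v s))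
      have t1 : ‖(-((qt s).im - (q s).im)) • vt s‖ ≤ Mδ * r :=
        smul_norm_le (by rw [abs_neg]; exact hδ2) hf1
      have t2 : ‖(-(q s).im) • (vt s - v s)‖ ≤ Mq * ‖D s‖ :=
        smul_norm_le (by rw [abs_neg]; exact hq2) hd1
      simp only [hK_def, hε_def]
      nlinarith [mul_nonneg hrnn hMδnn]
    calc ‖D' s‖ = max ‖(D' s).1‖ ‖(D' s).2‖ := rfl
      _ ≤ K * ‖D s‖ + ε := by
          apply max_le hb1
          calc ‖(D' s).2‖ = max ‖(D' s).2.1‖ ‖(D' s).2.2‖ := rfl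
            _ ≤ K * ‖D s‖ + ε := max_le hb2 hb3
  have hDcont : ContinuousOn D (Icc 0 L) := fun s hs => (hD s hs).continuousWithinAt
  have hD'r : ∀ s ∈ Ico (0:ℝ) L, HasDerivWithinAt D (D' s) (Ici s) s := fun s hs =>
    (hD s (Ico_subset_Icc_self hs)).mono_of_mem_nhdsWithin (Icc_mem_nhdsGE_of_mem hs)
  have hD0 : ‖D 0‖ ≤ 0 := by
    have : D 0 = 0 := by
      simp only [hD_def, hv0, he0, hw0, hvt0, het0, hwt0]
      simp [Prod.ext_iff]
    rw [this, norm_zero]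
  have hgron := norm_le_gronwallBound_of_norm_deriv_right_le hDcont hD'r hD0 bound
  intro s hs
  have hDle : ‖D s‖ ≤ 2*r*Mδ*Real.exp ((2*Mq+1)*L) := by
    have h1 := hgron s hs
    rw [sub_zero] at h1
    have h2 : gronwallBound 0 K ε s = ε / K * (Real.exp (K * s) - 1) := by
      rw [gronwallBound_of_K_ne_0 (ne_of_gt hKpos)]
      simp
    rw [h2] at h1
    have hK1 : 1 ≤ K := by simp only [hK_def]; linarith
    have hexp : Real.exp (K * s) - 1 ≤ Real.exp (K * L) := by
      have : K * s ≤ K * L := by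
        apply mul_le_mul_of_nonneg_left hs.2 (le_of_lt hKpos)
      nlinarith [Real.exp_le_exp.mpr this, Real.exp_pos (K*L)]
    have hdivK : ε / K ≤ ε := by
      rw [div_le_iff₀ hKpos]; nlinarith
    calc ‖D s‖ ≤ ε / K * (Real.exp (K * s) - 1) := h1
      _ ≤ ε * Real.exp (K * L) := by
          have he1 : 0 ≤ ε / K := div_nonneg hεnn (le_of_lt hKpos)
          have : Real.exp (K*s) - 1 ≥ 0 := by
            nlinarith [Real.one_le_exp (mul_nonneg (le_of_lt hKpos) hs.1 : (0:ℝ) ≤ K*s)]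
          nlinarith [Real.exp_pos (K*L)]
      _ = 2*r*Mδ*Real.exp ((2*Mq+1)*L) := by rw [hε_def, hK_def]
  obtain ⟨hd1, hd2, hd3⟩ := hDsub s
  exact ⟨le_trans hd1 hDle, le_trans hd2 hDle, le_trans hd3 hDle⟩

lemma intervalIntegral_mono_Ioo {L : ℝ} (hL : 0 < L) {F g : ℝ → ℝ}
    (hF : ∀ s, 0 ≤ F s) (hg : Continuous g) (hbd : ∀ s ∈ Ioo (0:ℝ) L, F s ≤ g s) :
    ∫ s in (0:ℝ)..L, F s ≤ ∫ s in (0:ℝ)..L, g s := by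
  rw [intervalIntegral.integral_of_le hL.le, intervalIntegral.integral_of_le hL.le,
    integral_Ioc_eq_integral_Ioo, integral_Ioc_eq_integral_Ioo]
  apply integral_mono_of_nonneg (ae_of_all _ hF)
  · exact (hg.integrableOn_Icc).mono_set Ioo_subset_Icc_self
  · exact (ae_restrict_iff' measurableSet_Ioo).2 (ae_of_all _ hbd)

lemma intervalIntegral_const_bound {L : ℝ} (hL : 0 < L) {F : ℝ → ℝ} {c : ℝ}
    (hF : ∀ s, 0 ≤ F s) (hbd : ∀ s ∈ Ioo (0:ℝ) L, F s ≤ c) :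
    ∫ s in (0:ℝ)..L, F s ≤ L * c := by
  have := intervalIntegral_mono_Ioo hL hF continuous_const hbd
  rwa [intervalIntegral.integral_const, sub_zero, smul_eq_mul] at this

/-- Gronwall factor -/
def dW (L c r y : ℝ) : ℝ := 2*r*c*Real.exp ((2*c*y+1)*L)
def k1W (L c r y : ℝ) : ℝ := 2*r*c + 2*c*y*dW L c r y
def k2W (L c r y : ℝ) : ℝ := 2*r*c + 2*c*y*dW L c r y + 2*r*c^2*y + c^2*y^2*dW L c r y
def k3W (L c r y : ℝ) : ℝ :=
  12*r*c^2*y + 6*c^2*y^2*dW L c r y + 4*r*c^3*y^2 + c^2*y^2*k1W L c r y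
def CW (L c r y : ℝ) : ℝ :=
  3*L*(dW L c r y)^2 + 3*L*(k1W L c r y)^2 + 3*L*(k2W L c r y)^2
    + 108 + 36*(dW L c r y)^2*y^2 + 9*L*(k3W L c r y)^2

lemma dW_nonneg {L c r y : ℝ} (hc : 0 ≤ c) (hr : 0 ≤ r) : 0 ≤ dW L c r y := by
  unfold dW; positivity

lemma dW_mono {L c r y z : ℝ} (hL : 0 ≤ L) (hc : 0 ≤ c) (hr : 0 ≤ r) (hy : 0 ≤ y)
    (hyz : y ≤ z) : dW L c r y ≤ dW L c r z := by
  unfold dW; gcongr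

lemma k1W_nonneg {L c r y : ℝ} (hc : 0 ≤ c) (hr : 0 ≤ r) (hy : 0 ≤ y) : 0 ≤ k1W L c r y := by
  have := dW_nonneg (L := L) (y := y) hc hr; unfold k1W; positivity

lemma k1W_mono {L c r y z : ℝ} (hL : 0 ≤ L) (hc : 0 ≤ c) (hr : 0 ≤ r) (hy : 0 ≤ y)
    (hyz : y ≤ z) : k1W L c r y ≤ k1W L c r z := by
  have h1 := dW_mono hL hc hr hy hyz
  have h2 := dW_nonneg (L := L) (y := y) hc hr
  have hz : 0 ≤ z := le_trans hy hyz
  unfold k1W; gcongr <;> positivity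

lemma k2W_nonneg {L c r y : ℝ} (hc : 0 ≤ c) (hr : 0 ≤ r) (hy : 0 ≤ y) : 0 ≤ k2W L c r y := by
  have := dW_nonneg (L := L) (y := y) hc hr; unfold k2W; positivity

lemma k2W_mono {L c r y z : ℝ} (hL : 0 ≤ L) (hc : 0 ≤ c) (hr : 0 ≤ r) (hy : 0 ≤ y)
    (hyz : y ≤ z) : k2W L c r y ≤ k2W L c r z := by
  have h1 := dW_mono hL hc hr hy hyz
  have h2 := dW_nonneg (L := L) (y := y) hc hr
  have hz : 0 ≤ z := le_trans hy hyz
  unfold k2W; gcongr <;> positivity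

lemma k3W_nonneg {L c r y : ℝ} (hc : 0 ≤ c) (hr : 0 ≤ r) (hy : 0 ≤ y) : 0 ≤ k3W L c r y := by
  have h1 := dW_nonneg (L := L) (y := y) hc hr
  have h2 := k1W_nonneg (L := L) (y := y) hc hr hy
  unfold k3W; positivity

lemma k3W_mono {L c r y z : ℝ} (hL : 0 ≤ L) (hc : 0 ≤ c) (hr : 0 ≤ r) (hy : 0 ≤ y)
    (hyz : y ≤ z) : k3W L c r y ≤ k3W L c r z := by
  have h1 := dW_mono hL hc hr hy hyz
  have h2 := dW_nonneg (L := L) (y := y) hc hr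
  have h3 := k1W_mono hL hc hr hy hyz
  have h4 := k1W_nonneg (L := L) (y := y) hc hr hy
  have hz : 0 ≤ z := le_trans hy hyz
  unfold k3W; gcongr <;> positivity

lemma CW_nonneg {L c r y : ℝ} (hL : 0 ≤ L) (hc : 0 ≤ c) (hr : 0 ≤ r) (hy : 0 ≤ y) :
    0 ≤ CW L c r y := by
  have h1 := dW_nonneg (L := L) (y := y) hc hr
  have h2 := k1W_nonneg (L := L) (y := y) hc hr hy
  have h3 := k2W_nonneg (L := L) (y := y) hc hr hy
  have h4 := k3W_nonneg (L := L) (y := y) hc hr hy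
  unfold CW; positivity

lemma CW_mono {L c r y z : ℝ} (hL : 0 ≤ L) (hc : 0 ≤ c) (hr : 0 ≤ r) (hy : 0 ≤ y)
    (hyz : y ≤ z) : CW L c r y ≤ CW L c r z := by
  have h1 := dW_mono hL hc hr hy hyz
  have h2 := dW_nonneg (L := L) (y := y) hc hr
  have h3 := k1W_mono hL hc hr hy hyz
  have h4 := k1W_nonneg (L := L) (y := y) hc hr hy
  have h5 := k2W_mono hL hc hr hy hyz
  have h6 := k2W_nonneg (L := L) (y := y) hc hr hy
  have h7 := k3W_mono hL hc hr hy hyz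
  have h8 := k3W_nonneg (L := L) (y := y) hc hr hy
  have hz : 0 ≤ z := le_trans hy hyz
  unfold CW; gcongr <;> positivity


lemma abs_mul_le' {a b A B : ℝ} (ha : |a| ≤ A) (hb : |b| ≤ B) : |a*b| ≤ A*B := by
  rw [abs_mul]
  exact mul_le_mul ha hb (abs_nonneg _) (le_trans (abs_nonneg _) ha)

set_option maxHeartbeats 4000000 in
/-- the Hasimoto transformation of initial data maps H² perturbations of
`q₀` to H³ perturbations of `v₀`, with a constant depending only on `L` and the H² norms
of `q₀`, `q̃₀`, non-decreasing in those norms. -/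
theorem hasimoto_transform_of_perturbations
    (L : ℝ) (hL : 0 < L) :
    ∃ C : ℝ → ℝ, (∀ x, 0 < C x) ∧ Monotone C ∧
      ∀ (q₀ qt₀ : ℝ → ℂ), ContDiff ℝ 2 q₀ → ContDiff ℝ 2 qt₀ →
      ∀ (v₀ e₀ w₀ vt₀ et₀ wt₀ : ℝ → Fin 3 → ℝ),
      (∀ s ∈ Set.Icc (0:ℝ) L,
        HasDerivWithinAt v₀ ((q₀ s).re • e₀ s + (q₀ s).im • w₀ s) (Set.Icc 0 L) s) →
      (∀ s ∈ Set.Icc (0:ℝ) L,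
        HasDerivWithinAt e₀ (-(q₀ s).re • v₀ s) (Set.Icc 0 L) s) →
      (∀ s ∈ Set.Icc (0:ℝ) L,
        HasDerivWithinAt w₀ (-(q₀ s).im • v₀ s) (Set.Icc 0 L) s) →
      v₀ 0 = ![1, 0, 0] → e₀ 0 = ![0, -1, 0] → w₀ 0 = ![0, 0, 1] →
      (∀ s ∈ Set.Icc (0:ℝ) L,
        HasDerivWithinAt vt₀ ((qt₀ s).re • et₀ s + (qt₀ s).im • wt₀ s) (Set.Icc 0 L) s) →
      (∀ s ∈ Set.Icc (0:ℝ) L,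
        HasDerivWithinAt et₀ (-(qt₀ s).re • vt₀ s) (Set.Icc 0 L) s) →
      (∀ s ∈ Set.Icc (0:ℝ) L,
        HasDerivWithinAt wt₀ (-(qt₀ s).im • vt₀ s) (Set.Icc 0 L) s) →
      vt₀ 0 = ![1, 0, 0] → et₀ 0 = ![0, -1, 0] → wt₀ 0 = ![0, 0, 1] →
      sobNorm3 3 L (fun s => vt₀ s - v₀ s)
        ≤ C (sobNormC 2 L q₀ + sobNormC 2 L qt₀) *
            (sobNormC 2 L (fun s => qt₀ s - q₀ s)
              + sobNormC 2 L (fun s => qt₀ s - q₀ s) ^ 3) := by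
  refine ⟨fun x => Real.sqrt (CW L (Real.sqrt (1/L + 2)) (Real.sqrt 3) (Real.exp x)) + 1,
    fun x => by positivity, ?_, ?_⟩
  · intro x y hxy
    have h1 : Real.exp x ≤ Real.exp y := Real.exp_le_exp.mpr hxy
    have h2 := CW_mono (c := Real.sqrt (1/L+2)) (r := Real.sqrt 3) hL.le (Real.sqrt_nonneg _)
      (Real.sqrt_nonneg _) (Real.exp_pos x).le h1
    have h3 := Real.sqrt_le_sqrt h2
    simp only []
    linarith
  intro q₀ qt₀ hq hqt v₀ e₀ w₀ vt₀ et₀ wt₀ hv he hw hv0 he0 hw0 hvt het hwt hvt0 het0 hwt0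
  beta_reduce
  set c : ℝ := Real.sqrt (1/L + 2) with hc_def
  set r : ℝ := Real.sqrt 3 with hr_def
  have hcnn : 0 ≤ c := Real.sqrt_nonneg _
  have hrnn : 0 ≤ r := Real.sqrt_nonneg _
  have hr2 : r^2 = 3 := Real.sq_sqrt (by norm_num)
  set δf : ℝ → ℂ := fun s => qt₀ s - q₀ s with hδf_def
  set ρ : ℝ := sobNormC 2 L δf with hρ_def
  set x₀ : ℝ := sobNormC 2 L q₀ + sobNormC 2 L qt₀ with hx₀_def
  have hδ : ContDiff ℝ 2 δf := hqt.sub hq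
  have hρnn : 0 ≤ ρ := Real.sqrt_nonneg _
  have hsobq_nn : 0 ≤ sobNormC 2 L q₀ := Real.sqrt_nonneg _
  have hsobqt_nn : 0 ≤ sobNormC 2 L qt₀ := Real.sqrt_nonneg _
  have hx₀nn : 0 ≤ x₀ := by rw [hx₀_def]; linarith
  have hqle : sobNormC 2 L q₀ ≤ x₀ := by rw [hx₀_def]; linarith
  have hqtle : sobNormC 2 L qt₀ ≤ x₀ := by rw [hx₀_def]; linarith
  -- sup bounds
  have hsupq : ∀ s ∈ Icc (0:ℝ) L,
      ‖q₀ s‖ ≤ c * x₀ ∧ ‖deriv q₀ s‖ ≤ c * x₀ := by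
    intro s hs
    obtain ⟨h1, h2⟩ := sup_le_sobNormC hL hq hs
    rw [← hc_def] at h1 h2
    exact ⟨le_trans h1 (mul_le_mul_of_nonneg_left hqle hcnn),
      le_trans h2 (mul_le_mul_of_nonneg_left hqle hcnn)⟩
  have hsupqt : ∀ s ∈ Icc (0:ℝ) L,
      ‖qt₀ s‖ ≤ c * x₀ ∧ ‖deriv qt₀ s‖ ≤ c * x₀ := by
    intro s hs
    obtain ⟨h1, h2⟩ := sup_le_sobNormC hL hqt hs
    rw [← hc_def] at h1 h2
    exact ⟨le_trans h1 (mul_le_mul_of_nonneg_left hqtle hcnn),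
      le_trans h2 (mul_le_mul_of_nonneg_left hqtle hcnn)⟩
  have hsupδ : ∀ s ∈ Icc (0:ℝ) L,
      ‖δf s‖ ≤ c * ρ ∧ ‖deriv δf s‖ ≤ c * ρ := by
    intro s hs
    obtain ⟨h1, h2⟩ := sup_le_sobNormC hL hδ hs
    rw [← hc_def, ← hρ_def] at h1 h2
    exact ⟨h1, h2⟩
  -- re/im bounds
  have hbq : ∀ s ∈ Icc (0:ℝ) L, |(q₀ s).re| ≤ c*x₀ ∧ |(q₀ s).im| ≤ c*x₀ :=
    fun s hs => ⟨le_trans (Complex.abs_re_le_norm _) (hsupq s hs).1,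
      le_trans (Complex.abs_im_le_norm _) (hsupq s hs).1⟩
  have hbqt : ∀ s ∈ Icc (0:ℝ) L, |(qt₀ s).re| ≤ c*x₀ ∧ |(qt₀ s).im| ≤ c*x₀ :=
    fun s hs => ⟨le_trans (Complex.abs_re_le_norm _) (hsupqt s hs).1,
      le_trans (Complex.abs_im_le_norm _) (hsupqt s hs).1⟩
  have hbq' : ∀ s ∈ Icc (0:ℝ) L, |(deriv q₀ s).re| ≤ c*x₀ ∧ |(deriv q₀ s).im| ≤ c*x₀ :=
    fun s hs => ⟨le_trans (Complex.abs_re_le_norm _) (hsupq s hs).2,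
      le_trans (Complex.abs_im_le_norm _) (hsupq s hs).2⟩
  have hbqt' : ∀ s ∈ Icc (0:ℝ) L, |(deriv qt₀ s).re| ≤ c*x₀ ∧ |(deriv qt₀ s).im| ≤ c*x₀ :=
    fun s hs => ⟨le_trans (Complex.abs_re_le_norm _) (hsupqt s hs).2,
      le_trans (Complex.abs_im_le_norm _) (hsupqt s hs).2⟩
  have hδs : ∀ s, δf s = qt₀ s - q₀ s := fun s => by rw [hδf_def]
  have hbδ : ∀ s ∈ Icc (0:ℝ) L,
      |(qt₀ s).re - (q₀ s).re| ≤ c*ρ ∧ |(qt₀ s).im - (q₀ s).im| ≤ c*ρ := by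
    intro s hs
    have h1 := (hsupδ s hs).1
    have hre : (qt₀ s).re - (q₀ s).re = (δf s).re := by rw [hδs s, Complex.sub_re]
    have him : (qt₀ s).im - (q₀ s).im = (δf s).im := by rw [hδs s, Complex.sub_im]
    rw [hre, him]
    exact ⟨le_trans (Complex.abs_re_le_norm _) h1, le_trans (Complex.abs_im_le_norm _) h1⟩
  have hqd : Differentiable ℝ q₀ := hq.differentiable (by norm_num)
  have hqtd : Differentiable ℝ qt₀ := hqt.differentiable (by norm_num)
  have hδd : ∀ s, deriv δf s = deriv qt₀ s - deriv q₀ s := by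
    intro s
    rw [hδf_def]
    exact deriv_sub (hqtd s) (hqd s)
  have hbδ' : ∀ s ∈ Icc (0:ℝ) L, |(deriv qt₀ s).re - (deriv q₀ s).re| ≤ c*ρ
      ∧ |(deriv qt₀ s).im - (deriv q₀ s).im| ≤ c*ρ := by
    intro s hs
    have h1 := (hsupδ s hs).2
    rw [hδd s] at h1
    constructor
    · rw [show (deriv qt₀ s).re - (deriv q₀ s).re = (deriv qt₀ s - deriv q₀ s).re from
        (Complex.sub_re _ _).symm]
      exact le_trans (Complex.abs_re_le_norm _) h1
    · rw [show (deriv qt₀ s).im - (deriv q₀ s).im = (deriv qt₀ s - deriv q₀ s).im from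
        (Complex.sub_im _ _).symm]
      exact le_trans (Complex.abs_im_le_norm _) h1
  have hq' : ContDiff ℝ 1 (deriv q₀) := contDiff_one_deriv hq
  have hqt' : ContDiff ℝ 1 (deriv qt₀) := contDiff_one_deriv hqt
  have hδd2 : ∀ s, iteratedDeriv 2 δf s = deriv (deriv qt₀) s - deriv (deriv q₀) s := by
    intro s
    have h1 : iteratedDeriv 2 δf = deriv (deriv δf) := by
      show iteratedDeriv (1+1) δf = _
      rw [iteratedDeriv_succ, iteratedDeriv_one]
    rw [h1, funext hδd]
    exact deriv_sub ((hqt'.differentiable one_ne_zero) s) ((hq'.differentiable one_ne_zero) s)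
  have hq2eq : ∀ s, iteratedDeriv 2 q₀ s = deriv (deriv q₀) s := by
    intro s
    show iteratedDeriv (1+1) q₀ s = _
    rw [iteratedDeriv_succ, iteratedDeriv_one]
  -- frame bounds
  have hfr := frame_bound hL hv he hw hv0 he0 hw0
  have hfrt := frame_bound hL hvt het hwt hvt0 het0 hwt0
  rw [← hr_def] at hfr hfrt
  -- Gronwall
  have hgron := gronwall_frames hL q₀ qt₀ v₀ e₀ w₀ vt₀ et₀ wt₀ hv he hw hvt het hwt
    hv0 he0 hw0 hvt0 het0 hwt0 (c*x₀) (c*ρ) r (by positivity) (by positivity) hrnn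
    hbq hbδ hfrt
  set d : ℝ := dW L c r x₀ with hd_def
  have hdnn : 0 ≤ d := by rw [hd_def]; exact dW_nonneg hcnn hrnn
  have hdρ : 2*r*(c*ρ)*Real.exp ((2*(c*x₀)+1)*L) = d*ρ := by
    rw [hd_def]; unfold dW; ring
  have hDv : ∀ s ∈ Icc (0:ℝ) L, ‖vt₀ s - v₀ s‖ ≤ d*ρ := fun s hs => hdρ ▸ (hgron s hs).1
  have hDe : ∀ s ∈ Icc (0:ℝ) L, ‖et₀ s - e₀ s‖ ≤ d*ρ := fun s hs => hdρ ▸ (hgron s hs).2.1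
  have hDw : ∀ s ∈ Icc (0:ℝ) L, ‖wt₀ s - w₀ s‖ ≤ d*ρ := fun s hs => hdρ ▸ (hgron s hs).2.2
  -- scalar derivatives
  have hre : ∀ s, HasDerivAt (fun s => (q₀ s).re) ((deriv q₀ s).re) s :=
    fun s => Complex.reCLM.hasFDerivAt.comp_hasDerivAt s (hqd s).hasDerivAt
  have him : ∀ s, HasDerivAt (fun s => (q₀ s).im) ((deriv q₀ s).im) s :=
    fun s => Complex.imCLM.hasFDerivAt.comp_hasDerivAt s (hqd s).hasDerivAt
  have hret : ∀ s, HasDerivAt (fun s => (qt₀ s).re) ((deriv qt₀ s).re) s :=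
    fun s => Complex.reCLM.hasFDerivAt.comp_hasDerivAt s (hqtd s).hasDerivAt
  have himt : ∀ s, HasDerivAt (fun s => (qt₀ s).im) ((deriv qt₀ s).im) s :=
    fun s => Complex.imCLM.hasFDerivAt.comp_hasDerivAt s (hqtd s).hasDerivAt
  have hre' : ∀ s, HasDerivAt (fun s => (deriv q₀ s).re) ((deriv (deriv q₀) s).re) s :=
    fun s => Complex.reCLM.hasFDerivAt.comp_hasDerivAt s ((hq'.differentiable one_ne_zero) s).hasDerivAt
  have him' : ∀ s, HasDerivAt (fun s => (deriv q₀ s).im) ((deriv (deriv q₀) s).im) s :=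
    fun s => Complex.imCLM.hasFDerivAt.comp_hasDerivAt s ((hq'.differentiable one_ne_zero) s).hasDerivAt
  have hret' : ∀ s, HasDerivAt (fun s => (deriv qt₀ s).re) ((deriv (deriv qt₀) s).re) s :=
    fun s => Complex.reCLM.hasFDerivAt.comp_hasDerivAt s ((hqt'.differentiable one_ne_zero) s).hasDerivAt
  have himt' : ∀ s, HasDerivAt (fun s => (deriv qt₀ s).im) ((deriv (deriv qt₀) s).im) s :=
    fun s => Complex.imCLM.hasFDerivAt.comp_hasDerivAt s ((hqt'.differentiable one_ne_zero) s).hasDerivAt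
  -- frame derivatives at interior points
  have hvI : ∀ s ∈ Ioo (0:ℝ) L, HasDerivAt v₀ ((q₀ s).re • e₀ s + (q₀ s).im • w₀ s) s :=
    fun s hs => (hv s (Ioo_subset_Icc_self hs)).hasDerivAt (Icc_mem_nhds hs.1 hs.2)
  have heI : ∀ s ∈ Ioo (0:ℝ) L, HasDerivAt e₀ (-(q₀ s).re • v₀ s) s :=
    fun s hs => (he s (Ioo_subset_Icc_self hs)).hasDerivAt (Icc_mem_nhds hs.1 hs.2)
  have hwI : ∀ s ∈ Ioo (0:ℝ) L, HasDerivAt w₀ (-(q₀ s).im • v₀ s) s :=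
    fun s hs => (hw s (Ioo_subset_Icc_self hs)).hasDerivAt (Icc_mem_nhds hs.1 hs.2)
  have hvtI : ∀ s ∈ Ioo (0:ℝ) L, HasDerivAt vt₀ ((qt₀ s).re • et₀ s + (qt₀ s).im • wt₀ s) s :=
    fun s hs => (hvt s (Ioo_subset_Icc_self hs)).hasDerivAt (Icc_mem_nhds hs.1 hs.2)
  have hetI : ∀ s ∈ Ioo (0:ℝ) L, HasDerivAt et₀ (-(qt₀ s).re • vt₀ s) s :=
    fun s hs => (het s (Ioo_subset_Icc_self hs)).hasDerivAt (Icc_mem_nhds hs.1 hs.2)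
  have hwtI : ∀ s ∈ Ioo (0:ℝ) L, HasDerivAt wt₀ (-(qt₀ s).im • vt₀ s) s :=
    fun s hs => (hwt s (Ioo_subset_Icc_self hs)).hasDerivAt (Icc_mem_nhds hs.1 hs.2)
  -- the derivative expressions
  set E1 : ℝ → Fin 3 → ℝ := fun s =>
    ((qt₀ s).re • et₀ s + (qt₀ s).im • wt₀ s) - ((q₀ s).re • e₀ s + (q₀ s).im • w₀ s) with hE1_def
  set E2 : ℝ → Fin 3 → ℝ := fun s =>
    (deriv qt₀ s).re • et₀ s + (deriv qt₀ s).im • wt₀ s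
      - (deriv q₀ s).re • e₀ s - (deriv q₀ s).im • w₀ s
      - ((qt₀ s).re*(qt₀ s).re + (qt₀ s).im*(qt₀ s).im) • vt₀ s
      + ((q₀ s).re*(q₀ s).re + (q₀ s).im*(q₀ s).im) • v₀ s with hE2_def
  set E3 : ℝ → Fin 3 → ℝ := fun s =>
    (deriv (deriv qt₀) s).re • et₀ s + (deriv (deriv qt₀) s).im • wt₀ s
      - (deriv (deriv q₀) s).re • e₀ s - (deriv (deriv q₀) s).im • w₀ s
      - (3*((qt₀ s).re*(deriv qt₀ s).re + (qt₀ s).im*(deriv qt₀ s).im)) • vt₀ s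
      + (3*((q₀ s).re*(deriv q₀ s).re + (q₀ s).im*(deriv q₀ s).im)) • v₀ s
      - ((qt₀ s).re*(qt₀ s).re + (qt₀ s).im*(qt₀ s).im) • ((qt₀ s).re • et₀ s + (qt₀ s).im • wt₀ s)
      + ((q₀ s).re*(q₀ s).re + (q₀ s).im*(q₀ s).im) • ((q₀ s).re • e₀ s + (q₀ s).im • w₀ s) with hE3_def
  have h1 : ∀ s ∈ Ioo (0:ℝ) L, HasDerivAt (fun s => vt₀ s - v₀ s) (E1 s) s :=
    fun s hs => (hvtI s hs).sub (hvI s hs)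
  have h2 : ∀ s ∈ Ioo (0:ℝ) L, HasDerivAt E1 (E2 s) s := by
    intro s hs
    have H := (((hret s).smul (hetI s hs)).add ((himt s).smul (hwtI s hs))).sub
      (((hre s).smul (heI s hs)).add ((him s).smul (hwI s hs)))
    refine H.congr_deriv ?_
    simp only [hE2_def]
    module
  have h3 : ∀ s ∈ Ioo (0:ℝ) L, HasDerivAt E2 (E3 s) s := by
    intro s hs
    have Hct : HasDerivAt (fun s => ((qt₀ s).re*(qt₀ s).re + (qt₀ s).im*(qt₀ s).im))
        ((deriv qt₀ s).re*(qt₀ s).re + (qt₀ s).re*(deriv qt₀ s).re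
          + ((deriv qt₀ s).im*(qt₀ s).im + (qt₀ s).im*(deriv qt₀ s).im)) s :=
      ((hret s).mul (hret s)).add ((himt s).mul (himt s))
    have Hc : HasDerivAt (fun s => ((q₀ s).re*(q₀ s).re + (q₀ s).im*(q₀ s).im))
        ((deriv q₀ s).re*(q₀ s).re + (q₀ s).re*(deriv q₀ s).re
          + ((deriv q₀ s).im*(q₀ s).im + (q₀ s).im*(deriv q₀ s).im)) s :=
      ((hre s).mul (hre s)).add ((him s).mul (him s))
    have H := (((((hret' s).smul (hetI s hs)).add ((himt' s).smul (hwtI s hs))).sub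
      ((hre' s).smul (heI s hs))).sub ((him' s).smul (hwI s hs))).sub
      (Hct.smul (hvtI s hs)) |>.add (Hc.smul (hvI s hs))
    refine H.congr_deriv ?_
    simp only [hE3_def]
    module
  -- iterated derivative identities
  have hit1 : ∀ s ∈ Ioo (0:ℝ) L, iteratedDeriv 1 (fun s => vt₀ s - v₀ s) s = E1 s := by
    intro s hs
    rw [iteratedDeriv_one]
    exact (h1 s hs).deriv
  have hit2 : ∀ s ∈ Ioo (0:ℝ) L, iteratedDeriv 2 (fun s => vt₀ s - v₀ s) s = E2 s := by
    intro s hs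
    show iteratedDeriv (1+1) (fun s => vt₀ s - v₀ s) s = E2 s
    rw [iteratedDeriv_succ, iteratedDeriv_one]
    have heq : deriv (fun s => vt₀ s - v₀ s) =ᶠ[nhds s] E1 :=
      Filter.eventuallyEq_of_mem (isOpen_Ioo.mem_nhds hs) (fun t ht => (h1 t ht).deriv)
    rw [heq.deriv_eq]
    exact (h2 s hs).deriv
  have hit3 : ∀ s ∈ Ioo (0:ℝ) L, iteratedDeriv 3 (fun s => vt₀ s - v₀ s) s = E3 s := by
    intro s hs
    show iteratedDeriv (2+1) (fun s => vt₀ s - v₀ s) s = E3 s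
    rw [iteratedDeriv_succ]
    have heq : iteratedDeriv 2 (fun s => vt₀ s - v₀ s) =ᶠ[nhds s] E2 :=
      Filter.eventuallyEq_of_mem (isOpen_Ioo.mem_nhds hs) (fun t ht => hit2 t ht)
    rw [heq.deriv_eq]
    exact (h3 s hs).deriv
  -- pointwise bounds
  have hB1 : ∀ s ∈ Icc (0:ℝ) L, ‖E1 s‖ ≤ k1W L c r x₀ * ρ := by
    intro s hs'
    have hc1 : E1 s = ((qt₀ s).re - (q₀ s).re) • et₀ s + ((qt₀ s).im - (q₀ s).im) • wt₀ s
        + (q₀ s).re • (et₀ s - e₀ s) + (q₀ s).im • (wt₀ s - w₀ s) := by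
      simp only [hE1_def]; module
    rw [hc1]
    have t1 := smul_norm_le (hbδ s hs').1 (hfrt s hs').2.1
    have t2 := smul_norm_le (hbδ s hs').2 (hfrt s hs').2.2
    have t3 := smul_norm_le (hbq s hs').1 (hDe s hs')
    have t4 := smul_norm_le (hbq s hs').2 (hDw s hs')
    have n1 := norm_add_le (((qt₀ s).re - (q₀ s).re) • et₀ s + ((qt₀ s).im - (q₀ s).im) • wt₀ s
        + (q₀ s).re • (et₀ s - e₀ s)) ((q₀ s).im • (wt₀ s - w₀ s))
    have n2 := norm_add_le (((qt₀ s).re - (q₀ s).re) • et₀ s + ((qt₀ s).im - (q₀ s).im) • wt₀ s)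
        ((q₀ s).re • (et₀ s - e₀ s))
    have n3 := norm_add_le (((qt₀ s).re - (q₀ s).re) • et₀ s) (((qt₀ s).im - (q₀ s).im) • wt₀ s)
    have hk1 : k1W L c r x₀ * ρ = (c*ρ)*r + (c*ρ)*r + (c*x₀)*(d*ρ) + (c*x₀)*(d*ρ) := by
      rw [hd_def]; unfold k1W dW; ring
    linarith
  -- |q̃|²−|q|² bound
  have habs_sq : ∀ s ∈ Icc (0:ℝ) L,
      |(qt₀ s).re*(qt₀ s).re + (qt₀ s).im*(qt₀ s).im
        - ((q₀ s).re*(q₀ s).re + (q₀ s).im*(q₀ s).im)| ≤ 2*c^2*x₀*ρ := by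
    intro s hs'
    have eAt : (qt₀ s).re*(qt₀ s).re + (qt₀ s).im*(qt₀ s).im = ‖qt₀ s‖^2 := by
      rw [Complex.sq_norm, Complex.normSq_apply]
    have eA : (q₀ s).re*(q₀ s).re + (q₀ s).im*(q₀ s).im = ‖q₀ s‖^2 := by
      rw [Complex.sq_norm, Complex.normSq_apply]
    rw [eAt, eA]
    have h1 : |‖qt₀ s‖ - ‖q₀ s‖| ≤ ‖qt₀ s - q₀ s‖ :=
      abs_norm_sub_norm_le _ _
    have h2 : ‖qt₀ s - q₀ s‖ ≤ c*ρ := by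
      have := (hsupδ s hs').1
      rwa [hδs s] at this
    have h3 := (hsupqt s hs').1
    have h4 := (hsupq s hs').1
    have key : ‖qt₀ s‖^2 - ‖q₀ s‖^2
        = (‖qt₀ s‖ - ‖q₀ s‖)
          * (‖qt₀ s‖ + ‖q₀ s‖) := by ring
    rw [key, abs_mul]
    have h7 : |‖qt₀ s‖ + ‖q₀ s‖| ≤ 2*(c*x₀) := by
      rw [abs_of_nonneg (by positivity)]; linarith
    calc |‖qt₀ s‖ - ‖q₀ s‖| * |‖qt₀ s‖ + ‖q₀ s‖|
        ≤ (c*ρ) * (2*(c*x₀)) :=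
          mul_le_mul (le_trans h1 h2) h7 (abs_nonneg _) (by positivity)
      _ = 2*c^2*x₀*ρ := by ring
  have habs_c2 : ∀ s ∈ Icc (0:ℝ) L,
      |(q₀ s).re*(q₀ s).re + (q₀ s).im*(q₀ s).im| ≤ c^2*x₀^2 := by
    intro s hs'
    have eA : (q₀ s).re*(q₀ s).re + (q₀ s).im*(q₀ s).im = ‖q₀ s‖^2 := by
      rw [Complex.sq_norm, Complex.normSq_apply]
    rw [eA, abs_of_nonneg (by positivity)]
    have h4 := (hsupq s hs').1
    calc ‖q₀ s‖^2 ≤ (c*x₀)^2 :=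
        pow_le_pow_left₀ (norm_nonneg _) h4 2
      _ = c^2*x₀^2 := by ring
  have hB2 : ∀ s ∈ Icc (0:ℝ) L, ‖E2 s‖ ≤ k2W L c r x₀ * ρ := by
    intro s hs'
    have hc2 : E2 s = ((deriv qt₀ s).re - (deriv q₀ s).re) • et₀ s
        + ((deriv qt₀ s).im - (deriv q₀ s).im) • wt₀ s
        + (deriv q₀ s).re • (et₀ s - e₀ s) + (deriv q₀ s).im • (wt₀ s - w₀ s)
        - ((qt₀ s).re*(qt₀ s).re + (qt₀ s).im*(qt₀ s).im
            - ((q₀ s).re*(q₀ s).re + (q₀ s).im*(q₀ s).im)) • vt₀ s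
        - ((q₀ s).re*(q₀ s).re + (q₀ s).im*(q₀ s).im) • (vt₀ s - v₀ s) := by
      simp only [hE2_def]; module
    rw [hc2]
    have t1 := smul_norm_le (hbδ' s hs').1 (hfrt s hs').2.1
    have t2 := smul_norm_le (hbδ' s hs').2 (hfrt s hs').2.2
    have t3 := smul_norm_le (hbq' s hs').1 (hDe s hs')
    have t4 := smul_norm_le (hbq' s hs').2 (hDw s hs')
    have t5 := smul_norm_le (habs_sq s hs') (hfrt s hs').1
    have t6 := smul_norm_le (habs_c2 s hs') (hDv s hs')
    have n1 := norm_sub_le (((deriv qt₀ s).re - (deriv q₀ s).re) • et₀ s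
        + ((deriv qt₀ s).im - (deriv q₀ s).im) • wt₀ s
        + (deriv q₀ s).re • (et₀ s - e₀ s) + (deriv q₀ s).im • (wt₀ s - w₀ s)
        - ((qt₀ s).re*(qt₀ s).re + (qt₀ s).im*(qt₀ s).im
            - ((q₀ s).re*(q₀ s).re + (q₀ s).im*(q₀ s).im)) • vt₀ s)
        (((q₀ s).re*(q₀ s).re + (q₀ s).im*(q₀ s).im) • (vt₀ s - v₀ s))
    have n2 := norm_sub_le (((deriv qt₀ s).re - (deriv q₀ s).re) • et₀ s
        + ((deriv qt₀ s).im - (deriv q₀ s).im) • wt₀ s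
        + (deriv q₀ s).re • (et₀ s - e₀ s) + (deriv q₀ s).im • (wt₀ s - w₀ s))
        (((qt₀ s).re*(qt₀ s).re + (qt₀ s).im*(qt₀ s).im
            - ((q₀ s).re*(q₀ s).re + (q₀ s).im*(q₀ s).im)) • vt₀ s)
    have n3 := norm_add_le (((deriv qt₀ s).re - (deriv q₀ s).re) • et₀ s
        + ((deriv qt₀ s).im - (deriv q₀ s).im) • wt₀ s
        + (deriv q₀ s).re • (et₀ s - e₀ s)) ((deriv q₀ s).im • (wt₀ s - w₀ s))
    have n4 := norm_add_le (((deriv qt₀ s).re - (deriv q₀ s).re) • et₀ s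
        + ((deriv qt₀ s).im - (deriv q₀ s).im) • wt₀ s) ((deriv q₀ s).re • (et₀ s - e₀ s))
    have n5 := norm_add_le (((deriv qt₀ s).re - (deriv q₀ s).re) • et₀ s)
        (((deriv qt₀ s).im - (deriv q₀ s).im) • wt₀ s)
    have hk2 : k2W L c r x₀ * ρ = (c*ρ)*r + (c*ρ)*r + (c*x₀)*(d*ρ) + (c*x₀)*(d*ρ)
        + (2*c^2*x₀*ρ)*r + (c^2*x₀^2)*(d*ρ) := by
      rw [hd_def]; unfold k2W dW; ring
    linarith
  have hB3 : ∀ s ∈ Icc (0:ℝ) L, ‖E3 s‖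
      ≤ 2*r*‖iteratedDeriv 2 δf s‖
        + 2*(d*ρ)*‖iteratedDeriv 2 q₀ s‖ + k3W L c r x₀ * ρ := by
    intro s hs'
    have hc3 : E3 s = ((deriv (deriv qt₀) s).re - (deriv (deriv q₀) s).re) • et₀ s
        + ((deriv (deriv qt₀) s).im - (deriv (deriv q₀) s).im) • wt₀ s
        + (deriv (deriv q₀) s).re • (et₀ s - e₀ s)
        + (deriv (deriv q₀) s).im • (wt₀ s - w₀ s)
        - (3*((qt₀ s).re*(deriv qt₀ s).re + (qt₀ s).im*(deriv qt₀ s).im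
            - ((q₀ s).re*(deriv q₀ s).re + (q₀ s).im*(deriv q₀ s).im))) • vt₀ s
        - (3*((q₀ s).re*(deriv q₀ s).re + (q₀ s).im*(deriv q₀ s).im)) • (vt₀ s - v₀ s)
        - ((qt₀ s).re*(qt₀ s).re + (qt₀ s).im*(qt₀ s).im
            - ((q₀ s).re*(q₀ s).re + (q₀ s).im*(q₀ s).im))
              • ((qt₀ s).re • et₀ s + (qt₀ s).im • wt₀ s)
        - ((q₀ s).re*(q₀ s).re + (q₀ s).im*(q₀ s).im)
              • (((qt₀ s).re • et₀ s + (qt₀ s).im • wt₀ s)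
                  - ((q₀ s).re • e₀ s + (q₀ s).im • w₀ s)) := by
      simp only [hE3_def]; module
    rw [hc3]
    -- second-derivative coefficient bounds
    have b1 : |(deriv (deriv qt₀) s).re - (deriv (deriv q₀) s).re|
        ≤ ‖iteratedDeriv 2 δf s‖ := by
      rw [show (deriv (deriv qt₀) s).re - (deriv (deriv q₀) s).re
          = (iteratedDeriv 2 δf s).re by rw [hδd2 s, Complex.sub_re]]
      exact Complex.abs_re_le_norm _
    have b2 : |(deriv (deriv qt₀) s).im - (deriv (deriv q₀) s).im|
        ≤ ‖iteratedDeriv 2 δf s‖ := by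
      rw [show (deriv (deriv qt₀) s).im - (deriv (deriv q₀) s).im
          = (iteratedDeriv 2 δf s).im by rw [hδd2 s, Complex.sub_im]]
      exact Complex.abs_im_le_norm _
    have b3 : |(deriv (deriv q₀) s).re| ≤ ‖iteratedDeriv 2 q₀ s‖ := by
      rw [hq2eq s]; exact Complex.abs_re_le_norm _
    have b4 : |(deriv (deriv q₀) s).im| ≤ ‖iteratedDeriv 2 q₀ s‖ := by
      rw [hq2eq s]; exact Complex.abs_im_le_norm _
    -- γt − γ bound
    have b5 : |3*((qt₀ s).re*(deriv qt₀ s).re + (qt₀ s).im*(deriv qt₀ s).im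
        - ((q₀ s).re*(deriv q₀ s).re + (q₀ s).im*(deriv q₀ s).im))| ≤ 12*c^2*x₀*ρ := by
      have e5 : (qt₀ s).re*(deriv qt₀ s).re + (qt₀ s).im*(deriv qt₀ s).im
          - ((q₀ s).re*(deriv q₀ s).re + (q₀ s).im*(deriv q₀ s).im)
          = ((qt₀ s).re - (q₀ s).re)*(deriv qt₀ s).re
            + (q₀ s).re*((deriv qt₀ s).re - (deriv q₀ s).re)
            + ((qt₀ s).im - (q₀ s).im)*(deriv qt₀ s).im
            + (q₀ s).im*((deriv qt₀ s).im - (deriv q₀ s).im) := by ring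
      rw [abs_mul, abs_of_nonneg (by norm_num : (0:ℝ) ≤ 3), e5]
      have m1 := abs_mul_le' (hbδ s hs').1 (hbqt' s hs').1
      have m2 := abs_mul_le' (hbq s hs').1 (hbδ' s hs').1
      have m3 := abs_mul_le' (hbδ s hs').2 (hbqt' s hs').2
      have m4 := abs_mul_le' (hbq s hs').2 (hbδ' s hs').2
      have a1 := abs_add_le (((qt₀ s).re - (q₀ s).re)*(deriv qt₀ s).re
          + (q₀ s).re*((deriv qt₀ s).re - (deriv q₀ s).re)
          + ((qt₀ s).im - (q₀ s).im)*(deriv qt₀ s).im)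
          ((q₀ s).im*((deriv qt₀ s).im - (deriv q₀ s).im))
      have a2 := abs_add_le (((qt₀ s).re - (q₀ s).re)*(deriv qt₀ s).re
          + (q₀ s).re*((deriv qt₀ s).re - (deriv q₀ s).re))
          (((qt₀ s).im - (q₀ s).im)*(deriv qt₀ s).im)
      have a3 := abs_add_le (((qt₀ s).re - (q₀ s).re)*(deriv qt₀ s).re)
          ((q₀ s).re*((deriv qt₀ s).re - (deriv q₀ s).re))
      nlinarith
    have b6 : |3*((q₀ s).re*(deriv q₀ s).re + (q₀ s).im*(deriv q₀ s).im)| ≤ 6*c^2*x₀^2 := by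
      rw [abs_mul, abs_of_nonneg (by norm_num : (0:ℝ) ≤ 3)]
      have m1 := abs_mul_le' (hbq s hs').1 (hbq' s hs').1
      have m2 := abs_mul_le' (hbq s hs').2 (hbq' s hs').2
      have a1 := abs_add_le ((q₀ s).re*(deriv q₀ s).re) ((q₀ s).im*(deriv q₀ s).im)
      nlinarith
    have bΦt : ‖(qt₀ s).re • et₀ s + (qt₀ s).im • wt₀ s‖ ≤ 2*(c*x₀)*r := by
      have m1 := smul_norm_le (hbqt s hs').1 (hfrt s hs').2.1
      have m2 := smul_norm_le (hbqt s hs').2 (hfrt s hs').2.2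
      have a1 := norm_add_le ((qt₀ s).re • et₀ s) ((qt₀ s).im • wt₀ s)
      linarith
    have bE1 : ‖((qt₀ s).re • et₀ s + (qt₀ s).im • wt₀ s)
        - ((q₀ s).re • e₀ s + (q₀ s).im • w₀ s)‖ ≤ k1W L c r x₀ * ρ := by
      have := hB1 s hs'
      rwa [hE1_def] at this
    have t1 := smul_norm_le b1 (hfrt s hs').2.1
    have t2 := smul_norm_le b2 (hfrt s hs').2.2
    have t3 := smul_norm_le b3 (hDe s hs')
    have t4 := smul_norm_le b4 (hDw s hs')
    have t5 := smul_norm_le b5 (hfrt s hs').1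
    have t6 := smul_norm_le b6 (hDv s hs')
    have t7 := smul_norm_le (habs_sq s hs') bΦt
    have t8 := smul_norm_le (habs_c2 s hs') bE1
    have n1 := norm_sub_le (((deriv (deriv qt₀) s).re - (deriv (deriv q₀) s).re) • et₀ s
        + ((deriv (deriv qt₀) s).im - (deriv (deriv q₀) s).im) • wt₀ s
        + (deriv (deriv q₀) s).re • (et₀ s - e₀ s)
        + (deriv (deriv q₀) s).im • (wt₀ s - w₀ s)
        - (3*((qt₀ s).re*(deriv qt₀ s).re + (qt₀ s).im*(deriv qt₀ s).im
            - ((q₀ s).re*(deriv q₀ s).re + (q₀ s).im*(deriv q₀ s).im))) • vt₀ s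
        - (3*((q₀ s).re*(deriv q₀ s).re + (q₀ s).im*(deriv q₀ s).im)) • (vt₀ s - v₀ s)
        - ((qt₀ s).re*(qt₀ s).re + (qt₀ s).im*(qt₀ s).im
            - ((q₀ s).re*(q₀ s).re + (q₀ s).im*(q₀ s).im))
              • ((qt₀ s).re • et₀ s + (qt₀ s).im • wt₀ s))
        (((q₀ s).re*(q₀ s).re + (q₀ s).im*(q₀ s).im)
              • (((qt₀ s).re • et₀ s + (qt₀ s).im • wt₀ s)
                  - ((q₀ s).re • e₀ s + (q₀ s).im • w₀ s)))
    have n2 := norm_sub_le (((deriv (deriv qt₀) s).re - (deriv (deriv q₀) s).re) • et₀ s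
        + ((deriv (deriv qt₀) s).im - (deriv (deriv q₀) s).im) • wt₀ s
        + (deriv (deriv q₀) s).re • (et₀ s - e₀ s)
        + (deriv (deriv q₀) s).im • (wt₀ s - w₀ s)
        - (3*((qt₀ s).re*(deriv qt₀ s).re + (qt₀ s).im*(deriv qt₀ s).im
            - ((q₀ s).re*(deriv q₀ s).re + (q₀ s).im*(deriv q₀ s).im))) • vt₀ s
        - (3*((q₀ s).re*(deriv q₀ s).re + (q₀ s).im*(deriv q₀ s).im)) • (vt₀ s - v₀ s))
        (((qt₀ s).re*(qt₀ s).re + (qt₀ s).im*(qt₀ s).im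
            - ((q₀ s).re*(q₀ s).re + (q₀ s).im*(q₀ s).im))
              • ((qt₀ s).re • et₀ s + (qt₀ s).im • wt₀ s))
    have n3 := norm_sub_le (((deriv (deriv qt₀) s).re - (deriv (deriv q₀) s).re) • et₀ s
        + ((deriv (deriv qt₀) s).im - (deriv (deriv q₀) s).im) • wt₀ s
        + (deriv (deriv q₀) s).re • (et₀ s - e₀ s)
        + (deriv (deriv q₀) s).im • (wt₀ s - w₀ s)
        - (3*((qt₀ s).re*(deriv qt₀ s).re + (qt₀ s).im*(deriv qt₀ s).im
            - ((q₀ s).re*(deriv q₀ s).re + (q₀ s).im*(deriv q₀ s).im))) • vt₀ s)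
        ((3*((q₀ s).re*(deriv q₀ s).re + (q₀ s).im*(deriv q₀ s).im)) • (vt₀ s - v₀ s))
    have n4 := norm_sub_le (((deriv (deriv qt₀) s).re - (deriv (deriv q₀) s).re) • et₀ s
        + ((deriv (deriv qt₀) s).im - (deriv (deriv q₀) s).im) • wt₀ s
        + (deriv (deriv q₀) s).re • (et₀ s - e₀ s)
        + (deriv (deriv q₀) s).im • (wt₀ s - w₀ s))
        ((3*((qt₀ s).re*(deriv qt₀ s).re + (qt₀ s).im*(deriv qt₀ s).im
            - ((q₀ s).re*(deriv q₀ s).re + (q₀ s).im*(deriv q₀ s).im))) • vt₀ s)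
    have n5 := norm_add_le (((deriv (deriv qt₀) s).re - (deriv (deriv q₀) s).re) • et₀ s
        + ((deriv (deriv qt₀) s).im - (deriv (deriv q₀) s).im) • wt₀ s
        + (deriv (deriv q₀) s).re • (et₀ s - e₀ s))
        ((deriv (deriv q₀) s).im • (wt₀ s - w₀ s))
    have n6 := norm_add_le (((deriv (deriv qt₀) s).re - (deriv (deriv q₀) s).re) • et₀ s
        + ((deriv (deriv qt₀) s).im - (deriv (deriv q₀) s).im) • wt₀ s)
        ((deriv (deriv q₀) s).re • (et₀ s - e₀ s))
    have n7 := norm_add_le (((deriv (deriv qt₀) s).re - (deriv (deriv q₀) s).re) • et₀ s)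
        (((deriv (deriv qt₀) s).im - (deriv (deriv q₀) s).im) • wt₀ s)
    have hk3 : k3W L c r x₀ * ρ = (12*c^2*x₀*ρ)*r + (6*c^2*x₀^2)*(d*ρ)
        + (2*c^2*x₀*ρ)*(2*(c*x₀)*r) + (c^2*x₀^2)*(k1W L c r x₀*ρ) := by
      rw [hd_def]; unfold k3W k1W dW; ring
    linarith
  -- continuity facts needed for integrability
  have hcA : Continuous (fun s => ‖iteratedDeriv 2 δf s‖) := by
    have h1 : iteratedDeriv 2 δf = deriv (deriv δf) := by
      show iteratedDeriv (1+1) δf = _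
      rw [iteratedDeriv_succ, iteratedDeriv_one]
    rw [h1]
    exact continuous_norm.comp ((contDiff_one_deriv hδ).continuous_deriv le_rfl)
  have hcB : Continuous (fun s => ‖iteratedDeriv 2 q₀ s‖) := by
    have h1 : iteratedDeriv 2 q₀ = deriv (deriv q₀) := by
      show iteratedDeriv (1+1) q₀ = _
      rw [iteratedDeriv_succ, iteratedDeriv_one]
    rw [h1]
    exact continuous_norm.comp (hq'.continuous_deriv le_rfl)
  -- integral bounds
  have hJ0 : ∫ s in (0:ℝ)..L, norm3 (iteratedDeriv 0 (fun s => vt₀ s - v₀ s) s)^2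
      ≤ L * (3*(d*ρ)^2) := by
    apply intervalIntegral_const_bound hL (fun s => sq_nonneg _)
    intro s hs
    rw [iteratedDeriv_zero]
    show norm3 (vt₀ s - v₀ s)^2 ≤ 3*(d*ρ)^2
    have h1 : norm3 (vt₀ s - v₀ s) ≤ r * ‖vt₀ s - v₀ s‖ := by
      rw [hr_def]; exact norm3_le _
    have h5 : norm3 (vt₀ s - v₀ s) ≤ r * (d*ρ) :=
      le_trans h1 (mul_le_mul_of_nonneg_left (hDv s (Ioo_subset_Icc_self hs)) hrnn)
    calc norm3 (vt₀ s - v₀ s)^2 ≤ (r*(d*ρ))^2 :=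
        pow_le_pow_left₀ (Real.sqrt_nonneg _) h5 2
      _ = 3*(d*ρ)^2 := by rw [mul_pow, hr2]
  have hJ1 : ∫ s in (0:ℝ)..L, norm3 (iteratedDeriv 1 (fun s => vt₀ s - v₀ s) s)^2
      ≤ L * (3*(k1W L c r x₀*ρ)^2) := by
    apply intervalIntegral_const_bound hL (fun s => sq_nonneg _)
    intro s hs
    rw [hit1 s hs]
    have h1 : norm3 (E1 s) ≤ r * ‖E1 s‖ := by rw [hr_def]; exact norm3_le _
    have h5 : norm3 (E1 s) ≤ r * (k1W L c r x₀*ρ) :=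
      le_trans h1 (mul_le_mul_of_nonneg_left (hB1 s (Ioo_subset_Icc_self hs)) hrnn)
    calc norm3 (E1 s)^2 ≤ (r*(k1W L c r x₀*ρ))^2 :=
        pow_le_pow_left₀ (Real.sqrt_nonneg _) h5 2
      _ = 3*(k1W L c r x₀*ρ)^2 := by rw [mul_pow, hr2]
  have hJ2 : ∫ s in (0:ℝ)..L, norm3 (iteratedDeriv 2 (fun s => vt₀ s - v₀ s) s)^2
      ≤ L * (3*(k2W L c r x₀*ρ)^2) := by
    apply intervalIntegral_const_bound hL (fun s => sq_nonneg _)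
    intro s hs
    rw [hit2 s hs]
    have h1 : norm3 (E2 s) ≤ r * ‖E2 s‖ := by rw [hr_def]; exact norm3_le _
    have h5 : norm3 (E2 s) ≤ r * (k2W L c r x₀*ρ) :=
      le_trans h1 (mul_le_mul_of_nonneg_left (hB2 s (Ioo_subset_Icc_self hs)) hrnn)
    calc norm3 (E2 s)^2 ≤ (r*(k2W L c r x₀*ρ))^2 :=
        pow_le_pow_left₀ (Real.sqrt_nonneg _) h5 2
      _ = 3*(k2W L c r x₀*ρ)^2 := by rw [mul_pow, hr2]
  have hk1nn : 0 ≤ k1W L c r x₀ := k1W_nonneg hcnn hrnn hx₀nn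
  have hk3nn : 0 ≤ k3W L c r x₀ := k3W_nonneg hcnn hrnn hx₀nn
  have hJ3 : ∫ s in (0:ℝ)..L, norm3 (iteratedDeriv 3 (fun s => vt₀ s - v₀ s) s)^2
      ≤ 108*ρ^2 + 36*(d*ρ)^2*x₀^2 + L*(9*(k3W L c r x₀*ρ)^2) := by
    have hgc : Continuous (fun s => 108*(‖iteratedDeriv 2 δf s‖)^2
        + 36*(d*ρ)^2*(‖iteratedDeriv 2 q₀ s‖)^2 + 9*(k3W L c r x₀*ρ)^2) := by
      apply Continuous.add
      apply Continuous.add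
      · exact continuous_const.mul (hcA.pow 2)
      · exact continuous_const.mul (hcB.pow 2)
      · exact continuous_const
    have step1 : ∫ s in (0:ℝ)..L, norm3 (iteratedDeriv 3 (fun s => vt₀ s - v₀ s) s)^2
        ≤ ∫ s in (0:ℝ)..L, (108*(‖iteratedDeriv 2 δf s‖)^2
          + 36*(d*ρ)^2*(‖iteratedDeriv 2 q₀ s‖)^2 + 9*(k3W L c r x₀*ρ)^2) := by
      apply intervalIntegral_mono_Ioo hL (fun s => sq_nonneg _) hgc
      intro s hs
      rw [hit3 s hs]
      set A := ‖iteratedDeriv 2 δf s‖ with hA_def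
      set B := ‖iteratedDeriv 2 q₀ s‖ with hB_def
      have hAnn : 0 ≤ A := norm_nonneg _
      have hBnn : 0 ≤ B := norm_nonneg _
      have hX : ‖E3 s‖ ≤ 2*r*A + 2*(d*ρ)*B + k3W L c r x₀ * ρ := hB3 s (Ioo_subset_Icc_self hs)
      have h1 : norm3 (E3 s) ≤ r * ‖E3 s‖ := by rw [hr_def]; exact norm3_le _
      have h5 : norm3 (E3 s) ≤ r * (2*r*A + 2*(d*ρ)*B + k3W L c r x₀ * ρ) :=
        le_trans h1 (mul_le_mul_of_nonneg_left hX hrnn)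
      have h6 : norm3 (E3 s)^2 ≤ r^2 * (2*r*A + 2*(d*ρ)*B + k3W L c r x₀ * ρ)^2 := by
        calc norm3 (E3 s)^2 ≤ (r * (2*r*A + 2*(d*ρ)*B + k3W L c r x₀ * ρ))^2 :=
            pow_le_pow_left₀ (Real.sqrt_nonneg _) h5 2
          _ = r^2 * (2*r*A + 2*(d*ρ)*B + k3W L c r x₀ * ρ)^2 := by rw [mul_pow]
      rw [hr2] at h6
      have h7 : (2*r*A + 2*(d*ρ)*B + k3W L c r x₀ * ρ)^2
          ≤ 3*((2*r*A)^2 + (2*(d*ρ)*B)^2 + (k3W L c r x₀ * ρ)^2) := by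
        nlinarith [sq_nonneg (2*r*A - 2*(d*ρ)*B), sq_nonneg (2*r*A - k3W L c r x₀ * ρ),
          sq_nonneg (2*(d*ρ)*B - k3W L c r x₀ * ρ)]
      have h8 : 3*(3*((2*r*A)^2 + (2*(d*ρ)*B)^2 + (k3W L c r x₀ * ρ)^2))
          = 108*A^2 + 36*(d*ρ)^2*B^2 + 9*(k3W L c r x₀*ρ)^2 := by
        linear_combination (36*A^2) * hr2
      show norm3 (E3 s)^2 ≤ 108*A^2 + 36*(d*ρ)^2*B^2 + 9*(k3W L c r x₀*ρ)^2
      nlinarith [h6, h7]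
    refine le_trans step1 ?_
    have i1 : IntervalIntegrable (fun s => 108*(‖iteratedDeriv 2 δf s‖)^2)
        volume 0 L := (continuous_const.mul (hcA.pow 2)).intervalIntegrable 0 L
    have i2 : IntervalIntegrable (fun s => 36*(d*ρ)^2*(‖iteratedDeriv 2 q₀ s‖)^2)
        volume 0 L := (continuous_const.mul (hcB.pow 2)).intervalIntegrable 0 L
    have i3 : IntervalIntegrable (fun _ : ℝ => 9*(k3W L c r x₀*ρ)^2) volume 0 L :=
      intervalIntegrable_const
    rw [intervalIntegral.integral_add (i1.add i2) i3, intervalIntegral.integral_add i1 i2,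
      intervalIntegral.integral_const_mul, intervalIntegral.integral_const_mul,
      intervalIntegral.integral_const, sub_zero, smul_eq_mul]
    have e1 : ∫ s in (0:ℝ)..L, (‖iteratedDeriv 2 δf s‖)^2 ≤ ρ^2 := by
      have := integral_sq_le_sobNormC (le_refl 2) hL.le δf
      rwa [← hρ_def] at this
    have e2 : ∫ s in (0:ℝ)..L, (‖iteratedDeriv 2 q₀ s‖)^2 ≤ x₀^2 := by
      have h1 := integral_sq_le_sobNormC (le_refl 2) hL.le q₀
      have h2 : sobNormC 2 L q₀ ^ 2 ≤ x₀^2 := pow_le_pow_left₀ hsobq_nn hqle 2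
      linarith
    have e3 : (0:ℝ) ≤ 36*(d*ρ)^2 := by positivity
    have e5 := mul_le_mul_of_nonneg_left e2 e3
    linarith
  -- final assembly
  have hCW : ρ^2 * CW L c r x₀ = L*(3*(d*ρ)^2) + L*(3*(k1W L c r x₀*ρ)^2)
      + L*(3*(k2W L c r x₀*ρ)^2)
      + (108*ρ^2 + 36*(d*ρ)^2*x₀^2 + L*(9*(k3W L c r x₀*ρ)^2)) := by
    rw [hd_def]; unfold CW; ring
  have hsum : (∑ k ∈ Finset.range (3+1), ∫ s in (0:ℝ)..L,
      norm3 (iteratedDeriv k (fun s => vt₀ s - v₀ s) s)^2) ≤ ρ^2 * CW L c r x₀ := by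
    rw [Finset.sum_range_succ, Finset.sum_range_succ, Finset.sum_range_succ,
      Finset.sum_range_one, hCW]
    linarith
  have hCWnn : 0 ≤ CW L c r x₀ := CW_nonneg hL.le hcnn hrnn hx₀nn
  have hs1 : sobNorm3 3 L (fun s => vt₀ s - v₀ s) ≤ ρ * Real.sqrt (CW L c r x₀) := by
    unfold sobNorm3
    refine le_trans (Real.sqrt_le_sqrt hsum) ?_
    rw [Real.sqrt_mul (sq_nonneg ρ), Real.sqrt_sq hρnn]
  have hs2 : Real.sqrt (CW L c r x₀) ≤ Real.sqrt (CW L c r (Real.exp x₀)) :=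
    Real.sqrt_le_sqrt (CW_mono hL.le hcnn hrnn hx₀nn
      (by linarith [Real.add_one_le_exp x₀]))
  have hs3 : 0 ≤ Real.sqrt (CW L c r (Real.exp x₀)) := Real.sqrt_nonneg _
  calc sobNorm3 3 L (fun s => vt₀ s - v₀ s) ≤ ρ * Real.sqrt (CW L c r x₀) := hs1
    _ ≤ ρ * Real.sqrt (CW L c r (Real.exp x₀)) := mul_le_mul_of_nonneg_left hs2 hρnn
    _ ≤ (Real.sqrt (CW L c r (Real.exp x₀)) + 1) * (ρ + ρ^3) := by
        nlinarith [pow_nonneg hρnn 3, mul_nonneg hs3 (pow_nonneg hρnn 3)]
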